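/- Let H_r ∈ ℝ^{L×k_r} have full column rank, H_p ∈ ℝ^{L×k_p} with k_r < k_p ≤ L, W* = (H_rᵀH_r)⁻¹H_rᵀH_p, and R = H_p − H_rW* with singular values σ_1(R) ≥ σ_2(R) ≥ …. Then for every X ∈ ℝ^{L×(k_p−k_r)} and every A ∈ ℝ^{k_p×k_p}, ‖H_p − [H_r, X]A‖_F² ≥ Σ_{i > k_p−k_r} σ_i(R)². -/

import Mathlib

open Matrix

/-- Squared Frobenius norm of a real matrix: ‖M‖_F² = trace(MᵀM). -/
noncomputable def frobSq {m n : ℕ} (M : Matrix (Fin m) (Fin n) ℝ) : ℝ :=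
  Matrix.trace (Mᵀ * M)

/-- The `L × k` rectangular diagonal matrix with diagonal entries `σ 0, σ 1, …`. -/
noncomputable def rectDiag (L k : ℕ) (σ : ℕ → ℝ) : Matrix (Fin L) (Fin k) ℝ :=
  Matrix.of fun i j => if (i : ℕ) = (j : ℕ) then σ (i : ℕ) else 0

namespace CLB

open Finset Module

lemma frobSq_eq_sum {m n : ℕ} (M : Matrix (Fin m) (Fin n) ℝ) :
    frobSq M = ∑ i, ∑ j, M i j ^ 2 := by
  rw [Finset.sum_comm]
  simp [frobSq, Matrix.trace, Matrix.diag, Matrix.mul_apply, sq]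

lemma frobSq_nonneg {m n : ℕ} (M : Matrix (Fin m) (Fin n) ℝ) : 0 ≤ frobSq M := by
  rw [frobSq_eq_sum]; positivity

lemma sumA {r m : ℕ} (hrm : r ≤ m) (σ c : ℕ → ℝ) (hσ : Antitone σ) (hσ0 : ∀ i, 0 ≤ σ i)
    (hc0 : ∀ j, 0 ≤ c j) (hc1 : ∀ j, c j ≤ 1)
    (hcs : ∑ j ∈ Finset.range m, c j ≤ r) :
    ∑ i ∈ Finset.Ico r m, σ i ^ 2 ≤ ∑ i ∈ Finset.range m, σ i ^ 2 * (1 - c i) := by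
  have hsplit : ∀ f : ℕ → ℝ, ∑ j ∈ Finset.range m, f j
      = ∑ j ∈ Finset.range r, f j + ∑ j ∈ Finset.Ico r m, f j := by
    intro f
    simp only [Finset.range_eq_Ico]
    exact (Finset.sum_Ico_consecutive _ (Nat.zero_le r) hrm).symm
  have h1 : ∑ i ∈ Finset.Ico r m, σ i ^ 2 * c i ≤ σ r ^ 2 * ∑ i ∈ Finset.Ico r m, c i := by
    rw [Finset.mul_sum]
    refine Finset.sum_le_sum fun i hi => ?_
    have hri : r ≤ i := (Finset.mem_Ico.mp hi).1
    have h := hσ hri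
    have hsq : σ i ^ 2 ≤ σ r ^ 2 := by nlinarith [hσ0 i]
    exact mul_le_mul_of_nonneg_right hsq (hc0 i)
  have h2 : ∑ i ∈ Finset.Ico r m, c i ≤ ∑ j ∈ Finset.range r, (1 - c j) := by
    have := hsplit c
    have hr : (∑ j ∈ Finset.range r, (1 - c j)) = r - ∑ j ∈ Finset.range r, c j := by
      rw [Finset.sum_sub_distrib]; simp
    rw [hr]; linarith
  have h3 : σ r ^ 2 * ∑ j ∈ Finset.range r, (1 - c j)
      ≤ ∑ j ∈ Finset.range r, σ j ^ 2 * (1 - c j) := by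
    rw [Finset.mul_sum]
    refine Finset.sum_le_sum fun j hj => ?_
    have hjr : j ≤ r := le_of_lt (Finset.mem_range.mp hj)
    have h := hσ hjr
    have hsq : σ r ^ 2 ≤ σ j ^ 2 := by nlinarith [hσ0 r]
    have : (0:ℝ) ≤ 1 - c j := by linarith [hc1 j]
    exact mul_le_mul_of_nonneg_right hsq this
  have h4 : σ r ^ 2 * ∑ i ∈ Finset.Ico r m, c i ≤ σ r ^ 2 * ∑ j ∈ Finset.range r, (1 - c j) := by
    have : (0:ℝ) ≤ σ r ^ 2 := by positivity
    exact mul_le_mul_of_nonneg_left h2 this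
  have h5 : ∑ i ∈ Finset.Ico r m, σ i ^ 2
      = ∑ i ∈ Finset.Ico r m, σ i ^ 2 * (1 - c i) + ∑ i ∈ Finset.Ico r m, σ i ^ 2 * c i := by
    rw [← Finset.sum_add_distrib]; congr 1; funext i; ring
  rw [hsplit (fun i => σ i ^ 2 * (1 - c i)), h5]
  have : ∑ i ∈ Finset.Ico r m, σ i ^ 2 * c i ≤ ∑ j ∈ Finset.range r, σ j ^ 2 * (1 - c j) :=
    le_trans h1 (le_trans h4 h3)
  linarith

lemma sum_sq_proj (Z : Matrix (Fin kp) (Fin d) ℝ)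
    (hZ : ∀ s t, ∑ j, Z j s * Z j t = if s = t then 1 else 0) (a : Fin d → ℝ) :
    ∑ l, (∑ t, Z l t * a t) ^ 2 = ∑ t, a t ^ 2 := by
  have : ∀ l : Fin kp, (∑ t, Z l t * a t) ^ 2
      = ∑ t, ∑ s, (a t * a s) * (Z l t * Z l s) := by
    intro l
    rw [sq, Finset.sum_mul_sum]
    refine Finset.sum_congr rfl fun t _ => Finset.sum_congr rfl fun s _ => by ring
  rw [Finset.sum_congr rfl fun l _ => this l, Finset.sum_comm]
  rw [Finset.sum_congr rfl fun t (_ : t ∈ univ) => Finset.sum_comm]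
  have : ∀ t : Fin d, ∑ s, ∑ l, (a t * a s) * (Z l t * Z l s) = a t ^ 2 := by
    intro t
    have : ∀ s : Fin d, ∑ l, (a t * a s) * (Z l t * Z l s)
        = (a t * a s) * (if t = s then 1 else 0) := by
      intro s
      rw [← Finset.mul_sum, hZ t s]
    rw [Finset.sum_congr rfl fun s _ => this s]
    simp [sq]
  rw [Finset.sum_congr rfl fun t _ => this t]

lemma proj_dist (Z : Matrix (Fin kp) (Fin d) ℝ)
    (hZ : ∀ s t, ∑ j, Z j s * Z j t = if s = t then 1 else 0) (x : Fin kp → ℝ) :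
    ∑ j, (x j - ∑ t, Z j t * (∑ l, Z l t * x l)) ^ 2
      = ∑ j, x j ^ 2 - ∑ t, (∑ l, Z l t * x l) ^ 2 := by
  set A : Fin d → ℝ := fun t => ∑ l, Z l t * x l with hA
  have hcross : ∑ j, x j * (∑ t, Z j t * A t) = ∑ t, A t ^ 2 := by
    have : ∀ j : Fin kp, x j * (∑ t, Z j t * A t) = ∑ t, A t * (Z j t * x j) := by
      intro j; rw [Finset.mul_sum]; exact Finset.sum_congr rfl fun t _ => by ring
    rw [Finset.sum_congr rfl fun j _ => this j, Finset.sum_comm]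
    refine Finset.sum_congr rfl fun t _ => ?_
    rw [← Finset.mul_sum, hA]
    simp [sq]
  have hPsq : ∑ j, (∑ t, Z j t * A t) ^ 2 = ∑ t, A t ^ 2 := sum_sq_proj Z hZ A
  have expand : ∀ j : Fin kp, (x j - ∑ t, Z j t * A t) ^ 2
      = x j ^ 2 - 2 * (x j * (∑ t, Z j t * A t)) + (∑ t, Z j t * A t) ^ 2 := by
    intro j; ring
  rw [Finset.sum_congr rfl fun j _ => expand j]
  rw [Finset.sum_add_distrib, Finset.sum_sub_distrib, ← Finset.mul_sum, hcross, hPsq]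
  ring

lemma exists_Z (D : Matrix (Fin r) (Fin kp) ℝ) :
    ∃ (d : ℕ) (Z : Matrix (Fin kp) (Fin d) ℝ), d ≤ r ∧
      (∀ s t, ∑ j, Z j s * Z j t = if s = t then 1 else 0) ∧
      (∀ g : Fin r → ℝ, ∀ j,
        ∑ t, Z j t * (∑ l, Z l t * (∑ k, g k * D k l)) = ∑ k, g k * D k j) := by
  classical
  let f : EuclideanSpace ℝ (Fin r) →ₗ[ℝ] EuclideanSpace ℝ (Fin kp) :=
    { toFun := fun g => WithLp.toLp 2 (fun j => ∑ k, g k * D k j : Fin kp → ℝ)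
      map_add' := by
        intro x y; ext j
        simp [add_mul, Finset.sum_add_distrib]
      map_smul' := by
        intro c x; ext j
        simp [Finset.mul_sum, mul_assoc] }
  set W := LinearMap.range f with hWdef
  have hdim : finrank ℝ W ≤ r := by
    have h1 := LinearMap.finrank_range_le f
    simpa using h1
  let b := stdOrthonormalBasis ℝ W
  refine ⟨finrank ℝ W, fun j t => ((b t : W) : EuclideanSpace ℝ (Fin kp)) j, hdim, ?_, ?_⟩
  · intro s t
    have horth := orthonormal_iff_ite.mp b.orthonormal s t
    have : (inner ℝ (b s) (b t) : ℝ)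
        = ∑ j, ((b s : W) : EuclideanSpace ℝ (Fin kp)) j * ((b t : W) : EuclideanSpace ℝ (Fin kp)) j := by
      rw [Submodule.coe_inner]
      rw [PiLp.inner_apply]
      simp [RCLike.inner_apply]
      exact Finset.sum_congr rfl fun _ _ => mul_comm _ _
    rw [← this, horth]
  · intro g j
    have hwW : (f (WithLp.toLp 2 g) : EuclideanSpace ℝ (Fin kp)) ∈ W := ⟨WithLp.toLp 2 g, rfl⟩
    have hrepr := b.sum_repr ⟨f (WithLp.toLp 2 g), hwW⟩
    have hco : ∀ t, b.repr ⟨f (WithLp.toLp 2 g), hwW⟩ t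
        = ∑ l, ((b t : W) : EuclideanSpace ℝ (Fin kp)) l * (∑ k, g k * D k l) := by
      intro t
      rw [b.repr_apply_apply, Submodule.coe_inner, PiLp.inner_apply]
      simp [RCLike.inner_apply]
      exact Finset.sum_congr rfl fun _ _ => mul_comm _ _
    have h4 := congrArg (fun v : W => (v : EuclideanSpace ℝ (Fin kp)) j) hrepr
    simp only [AddSubmonoidClass.coe_finset_sum, SetLike.val_smul, WithLp.ofLp_sum, Finset.sum_apply,
      PiLp.smul_apply, smul_eq_mul] at h4
    calc ∑ t, ((b t : W) : EuclideanSpace ℝ (Fin kp)) j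
          * (∑ l, ((b t : W) : EuclideanSpace ℝ (Fin kp)) l * (∑ k, g k * D k l))
        = ∑ t, b.repr ⟨f (WithLp.toLp 2 g), hwW⟩ t * ((b t : W) : EuclideanSpace ℝ (Fin kp)) j := by
          refine Finset.sum_congr rfl fun t _ => ?_
          rw [← hco t]; ring
      _ = ∑ k, g k * D k j := h4

lemma frobSq_proj_le {L kp : ℕ} (P : Matrix (Fin L) (Fin L) ℝ)
    (hPt : Pᵀ = P) (hPP : P * P = P) (M : Matrix (Fin L) (Fin kp) ℝ) :
    frobSq (P * M) ≤ frobSq M := by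
  have hPPM : P * (P * M) = P * M := by rw [← Matrix.mul_assoc, hPP]
  have h1 : (P * M)ᵀ * (P * M) = Mᵀ * (P * M) := by
    rw [transpose_mul, hPt, Matrix.mul_assoc, hPPM]
  have h1' : (P * M)ᵀ * M = Mᵀ * (P * M) := by
    rw [transpose_mul, hPt, Matrix.mul_assoc]
  have hQ : ((1 - P) * M)ᵀ * ((1 - P) * M) = Mᵀ * M - (P * M)ᵀ * (P * M) := by
    rw [Matrix.sub_mul, Matrix.one_mul, transpose_sub, Matrix.sub_mul, Matrix.mul_sub,
      Matrix.mul_sub, h1, h1']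
    abel
  have h2 : frobSq ((1 - P) * M) = frobSq M - frobSq (P * M) := by
    unfold frobSq
    rw [hQ, trace_sub]
  have := frobSq_nonneg ((1 - P) * M)
  linarith

lemma frobSq_unitary {L kp : ℕ} (U : Matrix (Fin L) (Fin L) ℝ)
    (V : Matrix (Fin kp) (Fin kp) ℝ) (M : Matrix (Fin L) (Fin kp) ℝ)
    (hU : Uᵀ * U = 1) (hV : Vᵀ * V = 1) :
    frobSq (U * M * Vᵀ) = frobSq M := by
  unfold frobSq
  have hUM : Uᵀ * (U * (M * Vᵀ)) = M * Vᵀ := by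
    rw [← Matrix.mul_assoc, hU, Matrix.one_mul]
  have h1 : (U * M * Vᵀ)ᵀ * (U * M * Vᵀ) = V * (Mᵀ * (M * Vᵀ)) := by
    rw [transpose_mul, transpose_mul, transpose_transpose]
    simp only [Matrix.mul_assoc]
    rw [hUM]
  rw [h1, Matrix.trace_mul_comm]
  rw [Matrix.mul_assoc, Matrix.mul_assoc, hV, Matrix.mul_one]

lemma isUnit_gram {L kr : ℕ} (Hr : Matrix (Fin L) (Fin kr) ℝ) (hrank : Hr.rank = kr) :
    IsUnit (Hrᵀ * Hr) := by
  have hg : (Hrᵀ * Hr).rank = kr := by rw [Matrix.rank_transpose_mul_self, hrank]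
  rw [← Matrix.mulVec_surjective_iff_isUnit]
  have : LinearMap.range (Hrᵀ * Hr).mulVecLin = ⊤ := by
    apply Submodule.eq_top_of_finrank_eq
    rw [← Matrix.rank, hg]
    simp [finrank_pi]
  intro y
  have := this ▸ Submodule.mem_top (x := y) (R := ℝ)
  obtain ⟨x, hx⟩ := this
  exact ⟨x, hx⟩

lemma coreB {L kp r : ℕ} (σ : ℕ → ℝ) (hσ : Antitone σ) (hσ0 : ∀ i, 0 ≤ σ i)
    (hrL : r ≤ L) (hrk : r ≤ kp)
    (G : Matrix (Fin L) (Fin r) ℝ) (D : Matrix (Fin r) (Fin kp) ℝ) :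
    ∑ i ∈ Finset.Ico r (min L kp), σ i ^ 2 ≤ frobSq (rectDiag L kp σ - G * D) := by
  classical
  obtain ⟨d, Z, hd, hZ, hfix⟩ := exists_Z D
  set m := min L kp with hm
  have hmL : m ≤ L := min_le_left _ _
  have hmk : m ≤ kp := min_le_right _ _
  have hrm : r ≤ m := le_min hrL hrk
  set c : ℕ → ℝ := fun j => if h : j < kp then ∑ t, Z ⟨j, h⟩ t ^ 2 else 0 with hc
  have hc0 : ∀ j, 0 ≤ c j := by
    intro j; rw [hc]; dsimp only; split
    · positivity
    · exact le_refl 0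
  have hcfin : ∀ (j : Fin kp), c ↑j = ∑ t, Z j t ^ 2 := by
    intro j; rw [hc]; simp [j.isLt]
  have hc1 : ∀ j, c j ≤ 1 := by
    intro j
    rcases lt_or_ge j kp with h | h
    · set j₀ : Fin kp := ⟨j, h⟩ with hj₀
      have hcj : c j = ∑ t, Z j₀ t ^ 2 := by rw [hc]; simp [h, hj₀]
      have h1 : ∑ l, (∑ t, Z l t * Z j₀ t) ^ 2 = ∑ t, Z j₀ t ^ 2 :=
        sum_sq_proj Z hZ (fun t => Z j₀ t)
      have h2 : (∑ t, Z j₀ t * Z j₀ t) = c j := by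
        rw [hcj]; exact Finset.sum_congr rfl fun t _ => (sq (Z j₀ t)).symm
      have h3 : (∑ t, Z j₀ t * Z j₀ t) ^ 2 ≤ ∑ l, (∑ t, Z l t * Z j₀ t) ^ 2 := by
        refine Finset.single_le_sum (f := fun l => (∑ t, Z l t * Z j₀ t) ^ 2)
          (fun l _ => by positivity) (Finset.mem_univ j₀)
      rw [h2, h1, ← hcj] at h3
      nlinarith [hc0 j]
    · rw [hc]; simp [Nat.not_lt.mpr h]
  have hcs : ∑ j ∈ Finset.range kp, c j ≤ (r : ℝ) := by
    rw [← Fin.sum_univ_eq_sum_range]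
    have : ∀ j : Fin kp, c ↑j = ∑ t, Z j t ^ 2 := hcfin
    rw [Finset.sum_congr rfl fun j _ => this j, Finset.sum_comm]
    have : ∀ t : Fin d, ∑ j : Fin kp, Z j t ^ 2 = 1 := by
      intro t
      have h1 : ∑ j : Fin kp, Z j t * Z j t = 1 := by simpa using hZ t t
      rw [← h1]
      exact Finset.sum_congr rfl fun j _ => sq (Z j t)
    rw [Finset.sum_congr rfl fun t _ => this t]
    simp only [Finset.sum_const, Finset.card_univ, Fintype.card_fin, nsmul_eq_mul, mul_one]
    exact_mod_cast hd
  -- per-row bound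
  have hrow : ∀ (i : Fin L) (hi : (i : ℕ) < kp),
      σ i ^ 2 * (1 - c i) ≤ ∑ j, ((rectDiag L kp σ - G * D) i j) ^ 2 := by
    intro i hi
    set j₀ : Fin kp := ⟨i, hi⟩ with hj₀
    set v : Fin kp → ℝ := fun j => if (i : ℕ) = (j : ℕ) then σ i else 0 with hv
    set w : Fin kp → ℝ := fun j => ∑ k, G i k * D k j with hwdef
    have hEntry : ∀ j, (rectDiag L kp σ - G * D) i j = v j - w j := by
      intro j; simp [rectDiag, Matrix.sub_apply, Matrix.mul_apply, hv, hwdef]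
    have hPw : ∀ j, ∑ t, Z j t * (∑ l, Z l t * w l) = w j := hfix (fun k => G i k)
    set u : Fin kp → ℝ := fun j => v j - w j with hu
    -- u - Pu = v - Pv
    have hdiff : ∀ j, u j - ∑ t, Z j t * (∑ l, Z l t * u l)
        = v j - ∑ t, Z j t * (∑ l, Z l t * v l) := by
      intro j
      have hA : ∀ t, (∑ l, Z l t * u l) = (∑ l, Z l t * v l) - (∑ l, Z l t * w l) := by
        intro t
        rw [← Finset.sum_sub_distrib]
        exact Finset.sum_congr rfl fun l _ => by rw [hu]; ring
      calc u j - ∑ t, Z j t * (∑ l, Z l t * u l)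
          = v j - w j - ∑ t, (Z j t * (∑ l, Z l t * v l) - Z j t * (∑ l, Z l t * w l)) := by
            rw [hu]
            congr 1
            exact Finset.sum_congr rfl fun t _ => by rw [hA t]; ring
        _ = v j - w j - (∑ t, Z j t * (∑ l, Z l t * v l)) + ∑ t, Z j t * (∑ l, Z l t * w l) := by
            rw [Finset.sum_sub_distrib]; ring
        _ = v j - ∑ t, Z j t * (∑ l, Z l t * v l) := by rw [hPw j]; ring
    have hvsq : ∑ j, v j ^ 2 = σ i ^ 2 := by
      have : ∀ j : Fin kp, v j ^ 2 = if j = j₀ then σ (i : ℕ) ^ 2 else 0 := by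
        intro j
        by_cases hj : j = j₀
        · subst hj; simp [hv, hj₀]
        · have : ¬ ((i : ℕ) = (j : ℕ)) := by
            intro hcon; exact hj (Fin.ext hcon.symm)
          simp [hv, this, hj]
      rw [Finset.sum_congr rfl fun j _ => this j, Finset.sum_ite_eq' _ j₀]
      simp
    have hAv : ∀ t, (∑ l, Z l t * v l) = Z j₀ t * σ i := by
      intro t
      have : ∀ l : Fin kp, Z l t * v l = if l = j₀ then Z j₀ t * σ (i:ℕ) else 0 := by
        intro l
        by_cases hl : l = j₀
        · subst hl; simp [hv, hj₀]
        · have : ¬ ((i : ℕ) = (l : ℕ)) := fun hcon => hl (Fin.ext hcon.symm)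
          simp [hv, this, hl]
      rw [Finset.sum_congr rfl fun l _ => this l, Finset.sum_ite_eq' _ j₀]
      simp
    have hAvsq : ∑ t, (∑ l, Z l t * v l) ^ 2 = σ i ^ 2 * c i := by
      have : ∀ t, (∑ l, Z l t * v l) ^ 2 = σ (i:ℕ) ^ 2 * Z j₀ t ^ 2 := by
        intro t; rw [hAv t]; ring
      rw [Finset.sum_congr rfl fun t _ => this t, ← Finset.mul_sum]
      have : c ↑i = ∑ t, Z j₀ t ^ 2 := by rw [hc]; simp [hi, hj₀]
      rw [this]
    have key : ∑ j, (u j - ∑ t, Z j t * (∑ l, Z l t * u l)) ^ 2 = σ i ^ 2 * (1 - c i) := by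
      rw [Finset.sum_congr rfl fun j _ => by rw [hdiff j]]
      rw [proj_dist Z hZ v, hvsq, hAvsq]
      ring
    have hle : ∑ j, (u j - ∑ t, Z j t * (∑ l, Z l t * u l)) ^ 2 ≤ ∑ j, u j ^ 2 := by
      rw [proj_dist Z hZ u]
      have : (0:ℝ) ≤ ∑ t, (∑ l, Z l t * u l) ^ 2 := by positivity
      linarith
    calc σ i ^ 2 * (1 - c i) = ∑ j, (u j - ∑ t, Z j t * (∑ l, Z l t * u l)) ^ 2 := key.symm
      _ ≤ ∑ j, u j ^ 2 := hle
      _ = ∑ j, ((rectDiag L kp σ - G * D) i j) ^ 2 :=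
          Finset.sum_congr rfl fun j _ => by rw [hEntry j]
  -- assemble
  rw [frobSq_eq_sum]
  have step1 : ∑ i ∈ Finset.range m, σ i ^ 2 * (1 - c i)
      ≤ ∑ i : Fin L, ∑ j, ((rectDiag L kp σ - G * D) i j) ^ 2 := by
    have hite : ∑ i ∈ Finset.range m, σ i ^ 2 * (1 - c i)
        = ∑ i ∈ Finset.range L, (if i < m then σ i ^ 2 * (1 - c i) else 0) := by
      rw [← Finset.sum_subset (Finset.range_subset_range.mpr hmL)
        (fun x _ hx => if_neg (fun hcon => hx (Finset.mem_range.mpr hcon)))]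
      exact Finset.sum_congr rfl fun i hi => (if_pos (Finset.mem_range.mp hi)).symm
    rw [hite, ← Fin.sum_univ_eq_sum_range (fun i => if i < m then σ i ^ 2 * (1 - c i) else 0) L]
    refine Finset.sum_le_sum fun i _ => ?_
    by_cases him : (i : ℕ) < m
    · rw [if_pos him]
      exact hrow i (lt_of_lt_of_le him hmk)
    · rw [if_neg him]; positivity
  have hcs' : ∑ j ∈ Finset.range m, c j ≤ (r : ℝ) := by
    refine le_trans ?_ hcs
    exact Finset.sum_le_sum_of_subset_of_nonneg (Finset.range_subset_range.mpr hmk)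
      (fun j _ _ => hc0 j)
  exact le_trans (sumA hrm σ c hσ hσ0 hc0 hc1 hcs') step1

end CLB

open CLB

/-- Lower bound for constrained reconstruction: for every `X` and `A`,
`‖H_p − [H_r, X]A‖_F² ≥ Σ_{i > k_p − k_r} σ_i(R)²`, where `σ 0 ≥ σ 1 ≥ …` are the
singular values of the residual `R = H_p − H_rW*` (given via an SVD `R = UΣVᵀ`). -/
theorem constrained_reconstruction_lower_bound {L kr kp : ℕ}
    (Hr : Matrix (Fin L) (Fin kr) ℝ) (Hp : Matrix (Fin L) (Fin kp) ℝ)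
    (hk : kr < kp) (hL : kp ≤ L) (hrank : Hr.rank = kr)
    (Wstar : Matrix (Fin kr) (Fin kp) ℝ)
    (hW : Wstar = (Hrᵀ * Hr)⁻¹ * Hrᵀ * Hp)
    (R : Matrix (Fin L) (Fin kp) ℝ)
    (hR : R = Hp - Hr * Wstar)
    (U : Matrix (Fin L) (Fin L) ℝ) (V : Matrix (Fin kp) (Fin kp) ℝ) (σ : ℕ → ℝ)
    (hU : Uᵀ * U = 1) (hU' : U * Uᵀ = 1)
    (hV : Vᵀ * V = 1) (hV' : V * Vᵀ = 1)
    (hσ : Antitone σ) (hσ0 : ∀ i, 0 ≤ σ i)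
    (hSVD : R = U * rectDiag L kp σ * Vᵀ)
    (X : Matrix (Fin L) (Fin (kp - kr)) ℝ)
    (A : Matrix (Fin kr ⊕ Fin (kp - kr)) (Fin kp) ℝ) :
    ∑ i ∈ Finset.Ico (kp - kr) (min L kp), σ i ^ 2 ≤
      frobSq (Hp - fromCols Hr X * A) := by
  classical
  have hunit : IsUnit (Hrᵀ * Hr) := isUnit_gram Hr hrank
  set N := (Hrᵀ * Hr)⁻¹ with hN
  have hNmul : N * (Hrᵀ * Hr) = 1 :=
    Matrix.nonsing_inv_mul _ ((Matrix.isUnit_iff_isUnit_det _).mp hunit)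
  have hNt : Nᵀ = N := by
    rw [hN, Matrix.transpose_nonsing_inv, Matrix.transpose_mul, Matrix.transpose_transpose]
  set P : Matrix (Fin L) (Fin L) ℝ := 1 - Hr * N * Hrᵀ with hP
  have key : Hr * N * Hrᵀ * Hr = Hr := by
    calc Hr * N * Hrᵀ * Hr = Hr * (N * (Hrᵀ * Hr)) := by simp only [Matrix.mul_assoc]
      _ = Hr := by rw [hNmul, Matrix.mul_one]
  have hPt : Pᵀ = P := by
    rw [hP]
    simp only [Matrix.transpose_sub, Matrix.transpose_one, Matrix.transpose_mul,
      Matrix.transpose_transpose, hNt, Matrix.mul_assoc]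
  have hPP : P * P = P := by
    rw [hP]
    have hKK : (Hr * N * Hrᵀ) * (Hr * N * Hrᵀ) = Hr * N * Hrᵀ := by
      calc (Hr * N * Hrᵀ) * (Hr * N * Hrᵀ) = (Hr * N * Hrᵀ * Hr) * (N * Hrᵀ) := by
            simp only [Matrix.mul_assoc]
        _ = Hr * N * Hrᵀ := by rw [key]; simp only [Matrix.mul_assoc]
    rw [Matrix.sub_mul, Matrix.mul_sub, Matrix.mul_sub, Matrix.one_mul, Matrix.mul_one, hKK]
    simp only [Matrix.one_mul]
    abel
  have hPHr : P * Hr = 0 := by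
    rw [hP, Matrix.sub_mul, Matrix.one_mul, key, sub_self]
  have hPHp : P * Hp = R := by
    rw [hP, Matrix.sub_mul, Matrix.one_mul, hR, hW]
    congr 1
    simp only [Matrix.mul_assoc]
  set A₁ := A.toRows₁ with hA1
  set A₂ := A.toRows₂ with hA2
  have hAsplit : fromCols Hr X * A = Hr * A₁ + X * A₂ := by
    calc fromCols Hr X * A = fromCols Hr X * fromRows A₁ A₂ := by
          rw [hA1, hA2, Matrix.fromRows_toRows]
      _ = Hr * A₁ + X * A₂ := Matrix.fromCols_mul_fromRows _ _ _ _
  have hPE : P * (Hp - fromCols Hr X * A) = R - (P * X) * A₂ := by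
    rw [hAsplit, Matrix.mul_sub, hPHp, Matrix.mul_add, ← Matrix.mul_assoc P Hr A₁, hPHr,
      Matrix.zero_mul, zero_add, Matrix.mul_assoc]
  have hfactor : U * (rectDiag L kp σ - (Uᵀ * (P * X)) * (A₂ * V)) * Vᵀ
      = R - (P * X) * A₂ := by
    rw [Matrix.mul_sub, Matrix.sub_mul, ← hSVD]
    congr 1
    calc U * ((Uᵀ * (P * X)) * (A₂ * V)) * Vᵀ
        = (U * Uᵀ) * ((P * X) * (A₂ * (V * Vᵀ))) := by simp only [Matrix.mul_assoc]
      _ = (P * X) * A₂ := by rw [hU', hV', Matrix.one_mul, Matrix.mul_one]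
  have hrL : kp - kr ≤ L := le_trans (Nat.sub_le kp kr) hL
  have hrk : kp - kr ≤ kp := Nat.sub_le kp kr
  calc ∑ i ∈ Finset.Ico (kp - kr) (min L kp), σ i ^ 2
      ≤ frobSq (rectDiag L kp σ - (Uᵀ * (P * X)) * (A₂ * V)) :=
        coreB σ hσ hσ0 hrL hrk _ _
    _ = frobSq (U * (rectDiag L kp σ - (Uᵀ * (P * X)) * (A₂ * V)) * Vᵀ) :=
        (frobSq_unitary U V _ hU hV).symm
    _ = frobSq (R - (P * X) * A₂) := by rw [hfactor]
    _ = frobSq (P * (Hp - fromCols Hr X * A)) := by rw [hPE]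
    _ ≤ frobSq (Hp - fromCols Hr X * A) := frobSq_proj_le P hPt hPP _
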